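/- Let Ω ⊂ ℝⁿ be a bounded open set, f : Ω → ℝ bounded with oscillation O_f = sup_Ω f − inf_Ω f, and λ > 0. If x ∈ Ω satisfies dist²(x, ∂Ω) > O_f/λ and z_x ∈ closure(Ω) satisfies M_{λ,Ω}(f⁻_Ω̄)(x) = f⁻_Ω̄(z_x) + λ|z_x − x|², then z_x ∈ Ω; that is, M_{λ,Ω}(f⁻_Ω̄)(x) is determined by values of f on Ω. -/
import Mathlib


noncomputable section
attribute [local instance] Classical.propDecidable

/-- Global lower Moreau envelope `M_λ(g)(x) = inf_{y∈ℝⁿ} {g(y) + λ|y−x|²}`. -/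
def moreauLower {n : ℕ} (lam : ℝ) (g : EuclideanSpace ℝ (Fin n) → ℝ)
    (x : EuclideanSpace ℝ (Fin n)) : ℝ :=
  ⨅ y : EuclideanSpace ℝ (Fin n), (g y + lam * ‖y - x‖ ^ 2)

/-- Global upper Moreau envelope `M^λ(g)(x) = sup_{y∈ℝⁿ} {g(y) − λ|y−x|²}`. -/
def moreauUpper {n : ℕ} (lam : ℝ) (g : EuclideanSpace ℝ (Fin n) → ℝ)
    (x : EuclideanSpace ℝ (Fin n)) : ℝ :=
  ⨆ y : EuclideanSpace ℝ (Fin n), (g y - lam * ‖y - x‖ ^ 2)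

/-- Local lower Moreau envelope `M_{λ,Ω}(g)(x) = inf_{y∈closure Ω} {g(y) + λ|y−x|²}`. -/
def moreauLowerLoc {n : ℕ} (lam : ℝ) (Ω : Set (EuclideanSpace ℝ (Fin n)))
    (g : EuclideanSpace ℝ (Fin n) → ℝ) (x : EuclideanSpace ℝ (Fin n)) : ℝ :=
  sInf ((fun y => g y + lam * ‖y - x‖ ^ 2) '' closure Ω)

/-- Local upper Moreau envelope `M^λ_Ω(g)(x) = sup_{y∈closure Ω} {g(y) − λ|y−x|²}`. -/
def moreauUpperLoc {n : ℕ} (lam : ℝ) (Ω : Set (EuclideanSpace ℝ (Fin n)))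
    (g : EuclideanSpace ℝ (Fin n) → ℝ) (x : EuclideanSpace ℝ (Fin n)) : ℝ :=
  sSup ((fun y => g y - lam * ‖y - x‖ ^ 2) '' closure Ω)

/-- The extension of `f` equal to `f` on `Ω` and to `inf_Ω f` off `Ω`
(this realizes both `f⁻_Ω̄` on `closure Ω` and `f⁻_ℝⁿ` on `ℝⁿ`). -/
def extMinus {n : ℕ} (Ω : Set (EuclideanSpace ℝ (Fin n)))
    (f : EuclideanSpace ℝ (Fin n) → ℝ) (x : EuclideanSpace ℝ (Fin n)) : ℝ :=
  if x ∈ Ω then f x else sInf (f '' Ω)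

/-- The extension of `f` equal to `f` on `Ω` and to `sup_Ω f` off `Ω`
(this realizes both `f⁺_Ω̄` on `closure Ω` and `f⁺_ℝⁿ` on `ℝⁿ`). -/
def extPlus {n : ℕ} (Ω : Set (EuclideanSpace ℝ (Fin n)))
    (f : EuclideanSpace ℝ (Fin n) → ℝ) (x : EuclideanSpace ℝ (Fin n)) : ℝ :=
  if x ∈ Ω then f x else sSup (f '' Ω)

/-- If `x ∈ Ω` with `dist²(x,∂Ω) > O_f/λ` and `z_x ∈ closure Ω` attains
`M_{λ,Ω}(f⁻_Ω̄)(x) = f⁻_Ω̄(z_x) + λ|z_x − x|²`, then `z_x ∈ Ω`: the value is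
determined by values of `f` on `Ω`. -/
theorem moreauLowerLoc_locality {n : ℕ} (Ω : Set (EuclideanSpace ℝ (Fin n)))
    (hΩo : IsOpen Ω) (hΩb : Bornology.IsBounded Ω)
    (f : EuclideanSpace ℝ (Fin n) → ℝ)
    (hf : ∃ C : ℝ, ∀ x ∈ Ω, |f x| ≤ C)
    (lam : ℝ) (hlam : 0 < lam)
    (x : EuclideanSpace ℝ (Fin n)) (hx : x ∈ Ω)
    (hdist : (Metric.infDist x (frontier Ω)) ^ 2
        > (sSup (f '' Ω) - sInf (f '' Ω)) / lam)
    (z_x : EuclideanSpace ℝ (Fin n)) (hz : z_x ∈ closure Ω)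
    (hatt : moreauLowerLoc lam Ω (extMinus Ω f) x
        = extMinus Ω f z_x + lam * ‖z_x - x‖ ^ 2) :
    z_x ∈ Ω := by
  by_contra hzo
  obtain ⟨C, hC⟩ := hf
  set S := sSup (f '' Ω) with hS
  set I := sInf (f '' Ω) with hI
  have hzfr : z_x ∈ frontier Ω := by
    rw [frontier, hΩo.interior_eq]
    exact ⟨hz, hzo⟩
  have hne : (f '' Ω).Nonempty := ⟨f x, x, hx, rfl⟩
  have hbddA : BddAbove (f '' Ω) := ⟨C, by rintro _ ⟨y, hy, rfl⟩; exact (abs_le.mp (hC y hy)).2⟩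
  have hbddB : BddBelow (f '' Ω) := ⟨-C, by rintro _ ⟨y, hy, rfl⟩; exact (abs_le.mp (hC y hy)).1⟩
  have hIC : -C ≤ I := le_csInf hne (by rintro _ ⟨y, hy, rfl⟩; exact (abs_le.mp (hC y hy)).1)
  have hglb : ∀ y, -C ≤ extMinus Ω f y := by
    intro y
    unfold extMinus
    split
    · exact (abs_le.mp (hC y ‹_›)).1
    · exact hIC
  have hMset : BddBelow ((fun y => extMinus Ω f y + lam * ‖y - x‖ ^ 2) '' closure Ω) := by
    refine ⟨-C, ?_⟩
    rintro _ ⟨y, _, rfl⟩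
    have : (0:ℝ) ≤ lam * ‖y - x‖ ^ 2 := mul_nonneg hlam.le (by positivity)
    dsimp only
    linarith [hglb y]
  have hMle : moreauLowerLoc lam Ω (extMinus Ω f) x ≤ f x := by
    have hmem : extMinus Ω f x + lam * ‖x - x‖ ^ 2
        ∈ (fun y => extMinus Ω f y + lam * ‖y - x‖ ^ 2) '' closure Ω :=
      ⟨x, subset_closure hx, rfl⟩
    have := csInf_le hMset hmem
    simpa [moreauLowerLoc, extMinus, hx] using this
  have hfxS : f x ≤ S := le_csSup hbddA ⟨x, hx, rfl⟩
  have hd : Metric.infDist x (frontier Ω) ≤ ‖z_x - x‖ := by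
    have := Metric.infDist_le_dist_of_mem (x := x) hzfr
    rwa [dist_eq_norm, norm_sub_rev] at this
  have hd0 : 0 ≤ Metric.infDist x (frontier Ω) := Metric.infDist_nonneg
  have hsq : (Metric.infDist x (frontier Ω)) ^ 2 ≤ ‖z_x - x‖ ^ 2 :=
    pow_le_pow_left₀ hd0 hd 2
  have hSI : S - I < lam * (Metric.infDist x (frontier Ω)) ^ 2 := by
    have := (div_lt_iff₀ hlam).mp hdist
    linarith
  have hez : extMinus Ω f z_x = I := by simp [extMinus, hzo, hI]
  have : f x < extMinus Ω f z_x + lam * ‖z_x - x‖ ^ 2 := by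
    rw [hez]
    have h1 : lam * (Metric.infDist x (frontier Ω)) ^ 2 ≤ lam * ‖z_x - x‖ ^ 2 :=
      mul_le_mul_of_nonneg_left hsq hlam.le
    linarith
  rw [← hatt] at this
  exact absurd (lt_of_le_of_lt hMle this) (lt_irrefl _)
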